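/- Let k ≥ 1, let n ≥ 2, and let ζ ∈ ℂ be a primitive (2n)-th root of unity. Then 2 · (the ℂ-dimension of the centralizer subalgebra {X : Matrix I_k I_k ℂ | X·D(k,ζ) = D(k,ζ)·X and X·P_k = P_k·X}) = Σ_{0 ≤ a ≤ k} Σ_{0 ≤ b ≤ k, a ≡ b (mod n)} C(k,a)·C(k,b). That is, dim Z_k(D_n) is half the dimension of Z_k(C_{2n}), equal to half the coefficient of z^k in (1+z)^{2k} reduced modulo z^n = 1. -/

import Mathlib

open Matrix

/-- The number of `-1` factors (encoded as `true`) in a simple tensor index. -/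
def wt {k : ℕ} (r : Fin k → Bool) : ℕ := (Finset.univ.filter fun i => r i = true).card

/-- The sign-reversal `-r` of an index, `(−r) i = ¬ (r i)`. -/
def negt {k : ℕ} (r : Fin k → Bool) : Fin k → Bool := fun i => !(r i)

/-- The matrix of `g^{⊗k}` on `V^{⊗k}` for `g = diag(ζ⁻¹, ζ)`. -/
noncomputable def Dmat (k : ℕ) (ζ : ℂ) : Matrix (Fin k → Bool) (Fin k → Bool) ℂ :=
  Matrix.diagonal fun r => ζ ^ ((k : ℤ) - 2 * (wt r : ℤ))

/-- The 0–1 matrix with `P r s = 1` iff `s = −r`. -/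
noncomputable def Pmat (k : ℕ) : Matrix (Fin k → Bool) (Fin k → Bool) ℂ :=
  Matrix.of fun r s => if s = negt r then 1 else 0

/-- The centralizer of a matrix `M`, as a submodule of the matrix algebra. -/
noncomputable def commSub {I : Type*} [Fintype I] [DecidableEq I] (M : Matrix I I ℂ) :
    Submodule ℂ (Matrix I I ℂ) where
  carrier := {X | X * M = M * X}
  add_mem' := by
    intro a b ha hb
    simp only [Set.mem_setOf_eq] at *
    rw [add_mul, mul_add, ha, hb]
  zero_mem' := by simp
  smul_mem' := by
    intro c X hX
    simp only [Set.mem_setOf_eq] at *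
    rw [smul_mul_assoc, mul_smul_comm, hX]
open Finset

section Aux

lemma negt_negt {k : ℕ} (r : Fin k → Bool) : negt (negt r) = r := by
  funext i; simp [negt]

lemma negt_ne {k : ℕ} (hk : 1 ≤ k) (r : Fin k → Bool) : negt r ≠ r := by
  intro h
  have := congrFun h ⟨0, hk⟩
  simp [negt] at this

lemma wt_add_wt_negt {k : ℕ} (r : Fin k → Bool) : wt r + wt (negt r) = k := by
  classical
  have h : (Finset.univ.filter fun i => negt r i = true)
      = (Finset.univ.filter fun i => ¬ (r i = true)) := by
    apply Finset.filter_congr; intro i _; simp [negt]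
  rw [wt, wt, h, Finset.card_filter_add_card_filter_not]
  simp

lemma wt_le {k : ℕ} (r : Fin k → Bool) : wt r ≤ k := Nat.le.intro (wt_add_wt_negt r)

lemma modeq_negt {k n : ℕ} {r s : Fin k → Bool} (h : wt r ≡ wt s [MOD n]) :
    wt (negt r) ≡ wt (negt s) [MOD n] := by
  apply Nat.ModEq.add_right_cancel' (wt r)
  calc wt (negt r) + wt r = wt (negt s) + wt s := by
        rw [Nat.add_comm, wt_add_wt_negt, Nat.add_comm, wt_add_wt_negt]
    _ ≡ wt (negt s) + wt r [MOD n] := (h.symm).add_left _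

/-- The key equivalence: equal eigenvalues of `Dmat` iff weights congruent mod `n`. -/
lemma zpow_key {n : ℕ} {ζ : ℂ} (hn : 2 ≤ n) (hζ : IsPrimitiveRoot ζ (2 * n)) (k a b : ℕ) :
    ζ ^ ((k : ℤ) - 2 * (a : ℤ)) = ζ ^ ((k : ℤ) - 2 * (b : ℤ)) ↔ a ≡ b [MOD n] := by
  have h2n : 2 * n ≠ 0 := by omega
  have h0 : ζ ≠ 0 := hζ.ne_zero h2n
  rw [← div_eq_one_iff_eq (zpow_ne_zero _ h0), ← zpow_sub₀ h0]
  have he : (k : ℤ) - 2 * a - ((k : ℤ) - 2 * b) = 2 * ((b : ℤ) - a) := by ring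
  rw [he, hζ.zpow_eq_one_iff_dvd, Nat.modEq_iff_dvd]
  push_cast
  rw [mul_dvd_mul_iff_left (two_ne_zero (α := ℤ))]

end Aux

section Main

variable (k n : ℕ)

/-- pairs with congruent weights -/
def Sset : Finset ((Fin k → Bool) × (Fin k → Bool)) :=
  Finset.univ.filter fun p => wt p.1 ≡ wt p.2 [MOD n]

/-- the sign-reversal involution on pairs -/
def sig {k : ℕ} (p : (Fin k → Bool) × (Fin k → Bool)) : (Fin k → Bool) × (Fin k → Bool) :=
  (negt p.1, negt p.2)

lemma sig_sig {k : ℕ} (p : (Fin k → Bool) × (Fin k → Bool)) : sig (sig p) = p := by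
  simp [sig, negt_negt]

lemma sig_ne {k : ℕ} (hk : 1 ≤ k) (p : (Fin k → Bool) × (Fin k → Bool)) : sig p ≠ p := by
  intro h
  exact negt_ne hk p.1 (congrArg Prod.fst h)

lemma sig_mem_Sset {p} (hp : p ∈ Sset k n) : sig p ∈ Sset k n := by
  simp only [Sset, Finset.mem_filter, Finset.mem_univ, true_and] at hp ⊢
  exact modeq_negt hp

/-- an injective encoding of pairs into ℕ -/
noncomputable def enc {k : ℕ} : ((Fin k → Bool) × (Fin k → Bool)) → ℕ :=
  fun p => ((Fintype.equivFin ((Fin k → Bool) × (Fin k → Bool))) p : ℕ)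

lemma enc_inj {k : ℕ} : Function.Injective (enc (k := k)) :=
  Fin.val_injective.comp (Fintype.equivFin _).injective

/-- a transversal of the `sig`-orbits on `Sset` -/
noncomputable def Tset : Finset ((Fin k → Bool) × (Fin k → Bool)) :=
  (Sset k n).filter fun p => enc p < enc (sig p)

lemma mem_Tset {p} : p ∈ Tset k n ↔ p ∈ Sset k n ∧ enc p < enc (sig p) :=
  Finset.mem_filter

lemma Tset_subset : Tset k n ⊆ Sset k n := Finset.filter_subset _ _

lemma sig_not_mem_Tset {p} (hp : p ∈ Tset k n) : sig p ∉ Tset k n := by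
  rw [mem_Tset] at hp ⊢
  rw [sig_sig]
  intro h
  omega

lemma mem_Tset_or {p} (hk : 1 ≤ k) (hp : p ∈ Sset k n) : p ∈ Tset k n ∨ sig p ∈ Tset k n := by
  have hne : enc (sig p) ≠ enc p := fun h => sig_ne hk p (enc_inj h)
  rcases lt_or_gt_of_ne hne with h | h
  · right
    rw [mem_Tset, sig_sig]
    exact ⟨sig_mem_Sset k n hp, h⟩
  · left
    rw [mem_Tset]
    exact ⟨hp, h⟩

lemma card_Sset_eq (hk : 1 ≤ k) : (Sset k n).card = 2 * (Tset k n).card := by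
  rw [two_mul]
  rw [← Finset.card_filter_add_card_filter_not
    (s := Sset k n) (p := fun p => enc p < enc (sig p))]
  congr 1
  apply Finset.card_bij (fun p _ => sig p)
  · intro p hp
    rw [Finset.mem_filter] at hp
    rw [mem_Tset, sig_sig]
    have hne : enc (sig p) ≠ enc p := fun h => sig_ne hk p (enc_inj h)
    exact ⟨sig_mem_Sset k n hp.1, by omega⟩
  · intro p₁ h₁ p₂ h₂ h
    have := congrArg sig h
    rwa [sig_sig, sig_sig] at this
  · intro q hq
    rw [mem_Tset] at hq
    refine ⟨sig q, ?_, sig_sig q⟩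
    rw [Finset.mem_filter, sig_sig]
    have hne : enc (sig q) ≠ enc q := fun h => sig_ne hk q (enc_inj h)
    exact ⟨sig_mem_Sset k n hq.1, by omega⟩

end Main

section Cent

variable (k n : ℕ) (ζ : ℂ)

lemma mem_Sset {p : (Fin k → Bool) × (Fin k → Bool)} :
    p ∈ Sset k n ↔ wt p.1 ≡ wt p.2 [MOD n] := by
  simp [Sset]

lemma mem_commSub {I : Type*} [Fintype I] [DecidableEq I] (M X : Matrix I I ℂ) :
    X ∈ commSub M ↔ X * M = M * X := Iff.rfl

lemma mem_commD (hn : 2 ≤ n) (hζ : IsPrimitiveRoot ζ (2 * n))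
    (X : Matrix (Fin k → Bool) (Fin k → Bool) ℂ) :
    X ∈ commSub (Dmat k ζ) ↔ ∀ r s, ¬ (wt r ≡ wt s [MOD n]) → X r s = 0 := by
  rw [mem_commSub]
  constructor
  · intro h r s hm
    have h1 : X r s * ζ ^ ((k:ℤ) - 2 * (wt s : ℤ)) = ζ ^ ((k:ℤ) - 2 * (wt r : ℤ)) * X r s := by
      have := congrFun (congrFun h r) s
      simpa [Dmat, Matrix.mul_diagonal, Matrix.diagonal_mul] using this
    have hne : ζ ^ ((k:ℤ) - 2*(wt r : ℤ)) ≠ ζ ^ ((k:ℤ) - 2*(wt s : ℤ)) :=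
      fun he => hm ((zpow_key hn hζ k _ _).mp he)
    have h2 : X r s * (ζ ^ ((k:ℤ) - 2*(wt s:ℤ)) - ζ ^ ((k:ℤ) - 2*(wt r:ℤ))) = 0 := by
      rw [mul_sub, h1]; ring
    rcases mul_eq_zero.mp h2 with h0 | h0
    · exact h0
    · exact absurd (sub_eq_zero.mp h0).symm hne
  · intro h
    ext r s
    simp only [Dmat, Matrix.mul_diagonal, Matrix.diagonal_mul]
    by_cases hm : wt r ≡ wt s [MOD n]
    · rw [(zpow_key hn hζ k (wt r) (wt s)).mpr hm, mul_comm]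
    · rw [h r s hm, zero_mul, mul_zero]

lemma mul_Pmat (X : Matrix (Fin k → Bool) (Fin k → Bool) ℂ) (r s : Fin k → Bool) :
    (X * Pmat k) r s = X r (negt s) := by
  simp only [Matrix.mul_apply, Pmat, Matrix.of_apply, mul_ite, mul_one, mul_zero]
  rw [Finset.sum_eq_single (negt s)]
  · simp [negt_negt]
  · intro t _ ht
    rw [if_neg]
    intro he
    exact ht (by rw [he, negt_negt])
  · simp

lemma Pmat_mul (X : Matrix (Fin k → Bool) (Fin k → Bool) ℂ) (r s : Fin k → Bool) :
    (Pmat k * X) r s = X (negt r) s := by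
  simp only [Matrix.mul_apply, Pmat, Matrix.of_apply, ite_mul, one_mul, zero_mul]
  rw [Finset.sum_eq_single (negt r)]
  · simp
  · intro t _ ht
    rw [if_neg ht]
  · simp

lemma mem_commP (X : Matrix (Fin k → Bool) (Fin k → Bool) ℂ) :
    X ∈ commSub (Pmat k) ↔ ∀ r s, X (negt r) (negt s) = X r s := by
  rw [mem_commSub]
  constructor
  · intro h r s
    have h1 := congrFun (congrFun h r) (negt s)
    rw [mul_Pmat, Pmat_mul, negt_negt] at h1
    exact h1.symm
  · intro h
    ext r s
    rw [mul_Pmat, Pmat_mul]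
    have h1 := h r (negt s)
    rw [negt_negt] at h1
    exact h1.symm

/-- The parametrization of the centralizer by free values on the transversal. -/
noncomputable def Phi : (↥(Tset k n) → ℂ) →ₗ[ℂ] Matrix (Fin k → Bool) (Fin k → Bool) ℂ where
  toFun c := Matrix.of fun r s =>
    if h : (r, s) ∈ Tset k n then c ⟨(r, s), h⟩
    else if h' : sig (r, s) ∈ Tset k n then c ⟨sig (r, s), h'⟩ else 0
  map_add' c d := by
    ext r s
    simp only [Matrix.of_apply, Matrix.add_apply, Pi.add_apply]
    split_ifs <;> simp
  map_smul' a c := by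
    ext r s
    simp only [Matrix.of_apply, Matrix.smul_apply, Pi.smul_apply, RingHom.id_apply]
    split_ifs <;> simp

lemma Phi_apply (c : ↥(Tset k n) → ℂ) (p : (Fin k → Bool) × (Fin k → Bool)) :
    Phi k n c p.1 p.2 =
      if h : p ∈ Tset k n then c ⟨p, h⟩
      else if h' : sig p ∈ Tset k n then c ⟨sig p, h'⟩ else 0 := by
  cases p; rfl

lemma Phi_notS (c : ↥(Tset k n) → ℂ) (p : (Fin k → Bool) × (Fin k → Bool))
    (hp : p ∉ Sset k n) : Phi k n c p.1 p.2 = 0 := by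
  have h1 : p ∉ Tset k n := fun h => hp (Tset_subset k n h)
  have h2 : sig p ∉ Tset k n := fun h => hp (by
    have := sig_mem_Sset k n (Tset_subset k n h)
    rwa [sig_sig] at this)
  rw [Phi_apply, dif_neg h1, dif_neg h2]

lemma Phi_sig (c : ↥(Tset k n) → ℂ) (p : (Fin k → Bool) × (Fin k → Bool)) :
    Phi k n c (sig p).1 (sig p).2 = Phi k n c p.1 p.2 := by
  rw [Phi_apply, Phi_apply, sig_sig]
  by_cases h : p ∈ Tset k n
  · rw [dif_neg (sig_not_mem_Tset k n h), dif_pos h, dif_pos h]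
  · by_cases h' : sig p ∈ Tset k n
    · rw [dif_pos h', dif_neg h, dif_pos h']
    · rw [dif_neg h', dif_neg h, dif_neg h', dif_neg h]

lemma Phi_inj : Function.Injective (Phi k n) := by
  intro c d h
  funext p
  have h1 := congrFun (congrFun h p.1.1) p.1.2
  rcases p with ⟨⟨r, s⟩, hp⟩
  simpa [Phi, dif_pos hp] using h1

lemma Phi_range (hk : 1 ≤ k) (hn : 2 ≤ n) (hζ : IsPrimitiveRoot ζ (2 * n)) :
    LinearMap.range (Phi k n) = commSub (Dmat k ζ) ⊓ commSub (Pmat k) := by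
  apply le_antisymm
  · rintro _ ⟨c, rfl⟩
    refine Submodule.mem_inf.mpr ⟨?_, ?_⟩
    · rw [mem_commD k n ζ hn hζ]
      intro r s hm
      exact Phi_notS k n c (r, s) (fun h => hm ((mem_Sset k n).mp h))
    · rw [mem_commP]
      intro r s
      exact Phi_sig k n c (r, s)
  · intro X hX
    rcases Submodule.mem_inf.mp hX with ⟨hD, hP⟩
    rw [mem_commD k n ζ hn hζ] at hD
    rw [mem_commP] at hP
    refine ⟨fun q => X q.1.1 q.1.2, ?_⟩
    ext r s
    show Phi k n _ (r, s).1 (r, s).2 = X r s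
    rw [Phi_apply]
    by_cases h : (r, s) ∈ Tset k n
    · rw [dif_pos h]
    · rw [dif_neg h]
      by_cases h' : sig (r, s) ∈ Tset k n
      · rw [dif_pos h']
        exact hP r s
      · rw [dif_neg h']
        by_cases hS : (r, s) ∈ Sset k n
        · rcases mem_Tset_or k n hk hS with h2 | h2
          · exact absurd h2 h
          · exact absurd h2 h'
        · exact (hD r s (fun hm => hS ((mem_Sset k n).mpr hm))).symm

lemma finrank_centralizer (hk : 1 ≤ k) (hn : 2 ≤ n) (hζ : IsPrimitiveRoot ζ (2 * n)) :
    Module.finrank ℂ ↥(commSub (Dmat k ζ) ⊓ commSub (Pmat k)) = (Tset k n).card := by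
  rw [← Phi_range k n ζ hk hn hζ, LinearMap.finrank_range_of_inj (Phi_inj k n),
    Module.finrank_fintype_fun_eq_card, Fintype.card_coe]

end Cent

section Count

variable (k n : ℕ)

lemma card_filter_wt (a : ℕ) :
    ((Finset.univ : Finset (Fin k → Bool)).filter fun r => wt r = a).card = k.choose a := by
  have h := Finset.card_powersetCard a (Finset.univ : Finset (Fin k))
  rw [Finset.card_univ, Fintype.card_fin] at h
  rw [← h]
  apply Finset.card_bij (fun r _ => Finset.univ.filter fun i => r i = true)
  · intro r hr
    rw [Finset.mem_powersetCard]
    exact ⟨Finset.subset_univ _, (Finset.mem_filter.mp hr).2⟩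
  · intro r₁ h₁ r₂ h₂ h
    funext i
    have hi := Finset.ext_iff.mp h i
    simp only [Finset.mem_filter, Finset.mem_univ, true_and] at hi
    cases hb₁ : r₁ i <;> cases hb₂ : r₂ i <;> simp_all
  · intro t ht
    rw [Finset.mem_powersetCard] at ht
    refine ⟨fun i => decide (i ∈ t), ?_, ?_⟩
    · rw [Finset.mem_filter]
      refine ⟨Finset.mem_univ _, ?_⟩
      show (Finset.univ.filter fun i => decide (i ∈ t) = true).card = a
      rw [← ht.2]
      congr 1
      ext i
      simp
    · ext i
      simp

lemma sum_wt (g : ℕ → ℕ) :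
    ∑ r : Fin k → Bool, g (wt r) = ∑ a ∈ Finset.range (k + 1), k.choose a * g a := by
  rw [← Finset.sum_fiberwise_of_maps_to (g := wt) (t := Finset.range (k + 1))
    (fun r _ => Finset.mem_range.mpr (Nat.lt_succ_of_le (wt_le r))) (fun r => g (wt r))]
  apply Finset.sum_congr rfl
  intro a _
  rw [Finset.sum_congr rfl (fun r hr => by rw [(Finset.mem_filter.mp hr).2]),
    Finset.sum_const, card_filter_wt, smul_eq_mul]

lemma card_Sset_val :
    (Sset k n).card = ∑ a ∈ Finset.range (k + 1), ∑ b ∈ Finset.range (k + 1),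
      if a ≡ b [MOD n] then k.choose a * k.choose b else 0 := by
  rw [Sset, Finset.card_filter, Fintype.sum_prod_type]
  have h1 : ∀ r : Fin k → Bool,
      (∑ s : Fin k → Bool, if wt r ≡ wt s [MOD n] then 1 else 0)
        = ∑ b ∈ Finset.range (k + 1), k.choose b * (if wt r ≡ b [MOD n] then 1 else 0) :=
    fun r => sum_wt k (fun b => if wt r ≡ b [MOD n] then 1 else 0)
  rw [Finset.sum_congr rfl (fun r _ => h1 r)]
  rw [sum_wt k (fun a => ∑ b ∈ Finset.range (k + 1),
    k.choose b * (if a ≡ b [MOD n] then 1 else 0))]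
  apply Finset.sum_congr rfl
  intro a _
  rw [Finset.mul_sum]
  apply Finset.sum_congr rfl
  intro b _
  by_cases hm : a ≡ b [MOD n]
  · rw [if_pos hm, if_pos hm, mul_one]
  · rw [if_neg hm, if_neg hm, mul_zero, mul_zero]

end Count


/-- `dim Z_k(D_n)` is half the dimension of `Z_k(C_{2n})`:
`2·dim Z_k(D_n) = Σ_{a ≡ b mod n} C(k,a)·C(k,b)`. -/
theorem stmt8 (k n : ℕ) (hk : 1 ≤ k) (hn : 2 ≤ n) (ζ : ℂ)
    (hζ : IsPrimitiveRoot ζ (2 * n)) :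
    2 * Module.finrank ℂ ↥(commSub (Dmat k ζ) ⊓ commSub (Pmat k)) =
      ∑ a ∈ Finset.range (k + 1), ∑ b ∈ Finset.range (k + 1),
        if a ≡ b [MOD n] then k.choose a * k.choose b else 0 := by
  rw [finrank_centralizer k n ζ hk hn hζ, ← card_Sset_eq k n hk, card_Sset_val]
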